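/- If a function f : ℂ → ℂ is continuous on an open set U ⊆ ℂ and complex differentiable at every point of U \ X, where X ⊆ U is a compact countable set with exactly one accumulation point w, and w ∈ X (i.e., X is a Polish space with characteristic system (1, 1)), then for every triangle △(z₁, z₂, z₃) contained in U, the integral of f along the closed polygonal path [z₁, z₂, z₃, z₁] equals 0. -/

import Mathlib

open Set Metric intervalIntegral

/-- The complex line integral of `f` along the segment from `a` to `b`:
`∫_{t ∈ [0,1]} f((1-t)·a + t·b) · (b - a) dt`. -/
noncomputable def segmentIntegral (f : ℂ → ℂ) (a b : ℂ) : ℂ :=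
  ∫ t in (0:ℝ)..1, f ((1 - t) • a + t • b) * (b - a)

/-- The integral of `f` along the closed polygonal path `[z₁, z₂, z₃, z₁]`. -/
noncomputable def triangleIntegral (f : ℂ → ℂ) (z₁ z₂ z₃ : ℂ) : ℂ :=
  segmentIntegral f z₁ z₂ + segmentIntegral f z₂ z₃ + segmentIntegral f z₃ z₁

/-- `w` is an accumulation point of `X`: every neighborhood of `w` contains a
point of `X` other than `w`. -/
def IsAccumulationPoint (w : ℂ) (X : Set ℂ) : Prop :=
  ∀ V ∈ nhds w, ∃ x, x ∈ V ∩ X ∧ x ≠ w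

lemma edge_hasDerivAt (f : ℂ → ℂ) (U : Set ℂ) (hU : IsOpen U)
    (hdiff : ∀ z ∈ U, DifferentiableAt ℂ f z)
    (hderc : ∀ z ∈ U, ContinuousAt (deriv f) z)
    (K' : Set ℂ) (hK'U : K' ⊆ U) (hK'c : IsCompact K')
    (p a b : ℂ) (η : ℝ) (hη : 0 < η)
    (hmem : ∀ s ∈ Icc (-η) (1+η), ∀ t ∈ Icc (0:ℝ) 1,
       p + s • (((1-t) • a + t • b) - p) ∈ K')
    (s₀ : ℝ) (hs₀ : s₀ ∈ Icc (0:ℝ) 1) :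
    HasDerivAt
      (fun s : ℝ => ∫ t in (0:ℝ)..1, f (p + s • (((1-t) • a + t • b) - p)) * (s • (b - a)))
      (f (p + s₀ • (b - p)) * (b - p) - f (p + s₀ • (a - p)) * (a - p)) s₀ := by
  set c : ℝ → ℂ := fun t => (1-t) • a + t • b with hc
  set γ : ℝ → ℝ → ℂ := fun s t => p + s • (c t - p) with hγ
  -- basic continuity of helpers
  have hccont : Continuous c := by fun_prop
  -- ball inclusion
  have hball : Metric.ball s₀ η ⊆ Icc (-η) (1+η) := by
    intro s hs
    rw [Metric.mem_ball, Real.dist_eq] at hs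
    have := abs_lt.1 hs
    constructor <;> [linarith [hs₀.1]; linarith [hs₀.2]]
  have hmemB : ∀ s ∈ Metric.ball s₀ η, ∀ t ∈ Icc (0:ℝ) 1, γ s t ∈ K' :=
    fun s hs t ht => hmem s (hball hs) t ht
  have hmemU : ∀ s ∈ Metric.ball s₀ η, ∀ t ∈ Icc (0:ℝ) 1, γ s t ∈ U :=
    fun s hs t ht => hK'U (hmemB s hs t ht)
  have hs₀ball : s₀ ∈ Metric.ball s₀ η := Metric.mem_ball_self hη
  -- bounds
  obtain ⟨C₀, hC₀⟩ := hK'c.exists_bound_of_continuousOn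
    (fun z hz => ((hdiff z (hK'U hz)).continuousAt).continuousWithinAt)
  obtain ⟨C₁, hC₁⟩ := hK'c.exists_bound_of_continuousOn
    (fun z hz => (hderc z (hK'U hz)).continuousWithinAt)
  set C : ℝ := max C₀ 0 with hCdef
  set C' : ℝ := max C₁ 0 with hC'def
  have hC : ∀ z ∈ K', ‖f z‖ ≤ C := fun z hz => (hC₀ z hz).trans (le_max_left _ _)
  have hC' : ∀ z ∈ K', ‖deriv f z‖ ≤ C' := fun z hz => (hC₁ z hz).trans (le_max_left _ _)
  have hCpos : 0 ≤ C := le_max_right _ _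
  have hC'pos : 0 ≤ C' := le_max_right _ _
  set M : ℝ := ‖a - p‖ + ‖b - p‖ with hM
  have hMb : ∀ t ∈ Icc (0:ℝ) 1, ‖c t - p‖ ≤ M := by
    intro t ht
    have h1 : c t - p = (1-t) • (a - p) + t • (b - p) := by
      simp only [hc, Complex.real_smul, Complex.ofReal_sub, Complex.ofReal_one]
      ring
    rw [h1]
    calc ‖(1-t) • (a - p) + t • (b - p)‖ ≤ ‖(1-t) • (a-p)‖ + ‖t • (b-p)‖ := norm_add_le _ _
      _ = |1-t| * ‖a-p‖ + |t| * ‖b-p‖ := by rw [norm_smul, norm_smul]; simp [Real.norm_eq_abs]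
      _ ≤ 1 * ‖a-p‖ + 1 * ‖b-p‖ := by
          gcongr
          · rw [abs_le]; constructor <;> [linarith [ht.2]; linarith [ht.1]]
          · rw [abs_le]; constructor <;> [linarith [ht.1]; linarith [ht.2]]
      _ = M := by rw [hM]; ring
  have hMpos : 0 ≤ M := add_nonneg (norm_nonneg _) (norm_nonneg _)
  -- the integrands
  set F : ℝ → ℝ → ℂ := fun s t => f (γ s t) * (s • (b - a)) with hF
  set F' : ℝ → ℝ → ℂ := fun s t =>
    ((c t - p) • deriv f (γ s t)) * (s • (b - a)) + f (γ s t) * ((1:ℝ) • (b - a)) with hF'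
  -- continuity in t
  have hγcont : ∀ s : ℝ, Continuous (fun t => γ s t) := by intro s; fun_prop
  have hFcont : ∀ s ∈ Metric.ball s₀ η, ContinuousOn (fun t => F s t) (Icc (0:ℝ) 1) := by
    intro s hs t ht
    exact (((hdiff _ (hmemU s hs t ht)).continuousAt.comp
      (hγcont s).continuousAt).mul continuousAt_const).continuousWithinAt
  have hF'cont : ContinuousOn (fun t => F' s₀ t) (Icc (0:ℝ) 1) := by
    intro t ht
    have h1 : ContinuousAt (fun t => deriv f (γ s₀ t)) t :=
      (hderc _ (hmemU s₀ hs₀ball t ht)).comp (hγcont s₀).continuousAt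
    have h2 : ContinuousAt (fun t => f (γ s₀ t)) t :=
      (hdiff _ (hmemU s₀ hs₀ball t ht)).continuousAt.comp (hγcont s₀).continuousAt
    exact (((((hccont.sub continuous_const).continuousAt).smul h1).mul
      continuousAt_const).add (h2.mul continuousAt_const)).continuousWithinAt
  -- the s-derivative at each (s, t)
  have hsderiv : ∀ s ∈ Metric.ball s₀ η, ∀ t ∈ Icc (0:ℝ) 1,
      HasDerivAt (fun s => F s t) (F' s t) s := by
    intro s hs t ht
    have hγs : HasDerivAt (fun s : ℝ => γ s t) (c t - p) s := by
      have := ((hasDerivAt_id s).smul_const (c t - p)).const_add p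
      simpa [hγ] using this
    have hfs : HasDerivAt (fun s => f (γ s t)) ((c t - p) • deriv f (γ s t)) s :=
      (hdiff _ (hmemU s hs t ht)).hasDerivAt.scomp s hγs
    have hmul : HasDerivAt (fun s : ℝ => s • (b - a)) ((1:ℝ) • (b - a)) s :=
      (hasDerivAt_id s).smul_const (b - a)
    exact hfs.mul hmul
  -- main application
  have hmeas : ∀ᶠ s in nhds s₀, MeasureTheory.AEStronglyMeasurable (F s)
      (MeasureTheory.volume.restrict (Set.uIoc (0:ℝ) 1)) := by
    filter_upwards [Metric.ball_mem_nhds s₀ hη] with s hs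
    exact ((hFcont s hs).mono
      (by rw [uIoc_of_le zero_le_one]; exact Ioc_subset_Icc_self)).aestronglyMeasurable
      measurableSet_uIoc
  have hint : IntervalIntegrable (F s₀) MeasureTheory.volume 0 1 :=
    ((hFcont s₀ hs₀ball).mono (by rw [uIcc_of_le zero_le_one])).intervalIntegrable
  have hmeas' : MeasureTheory.AEStronglyMeasurable (F' s₀)
      (MeasureTheory.volume.restrict (Set.uIoc (0:ℝ) 1)) :=
    (hF'cont.mono
      (by rw [uIoc_of_le zero_le_one]; exact Ioc_subset_Icc_self)).aestronglyMeasurable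
      measurableSet_uIoc
  set B : ℝ := (M * C') * ((1+η) * ‖b - a‖) + C * ‖b - a‖ with hB
  have hbound : ∀ᵐ t ∂MeasureTheory.volume, t ∈ Set.uIoc (0:ℝ) 1 →
      ∀ s ∈ Metric.ball s₀ η, ‖F' s t‖ ≤ B := by
    refine Filter.Eventually.of_forall fun t ht s hs => ?_
    have ht' : t ∈ Icc (0:ℝ) 1 := by
      rw [uIoc_of_le zero_le_one] at ht; exact Ioc_subset_Icc_self ht
    have hsabs : |s| ≤ 1 + η := by
      rw [Metric.mem_ball, Real.dist_eq] at hs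
      have := abs_lt.1 hs
      rw [abs_le]; constructor <;> [linarith [hs₀.1]; linarith [hs₀.2]]
    have hz : γ s t ∈ K' := hmemB s hs t ht'
    calc ‖F' s t‖ ≤ ‖((c t - p) • deriv f (γ s t)) * (s • (b - a))‖
          + ‖f (γ s t) * ((1:ℝ) • (b - a))‖ := norm_add_le _ _
      _ = (‖c t - p‖ * ‖deriv f (γ s t)‖) * (|s| * ‖b - a‖)
          + ‖f (γ s t)‖ * (|1| * ‖b - a‖) := by
          rw [norm_mul, norm_mul, norm_smul, norm_smul, norm_smul]
          simp [Real.norm_eq_abs]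
      _ ≤ (M * C') * ((1+η) * ‖b - a‖) + C * (|1| * ‖b - a‖) := by
          gcongr
          · exact hMb t ht'
          · exact hC' _ hz
          · exact hC _ hz
      _ = B := by rw [hB]; norm_num
  have hbint : IntervalIntegrable (fun _ : ℝ => B) MeasureTheory.volume 0 1 :=
    intervalIntegrable_const
  have hdiffF : ∀ᵐ t ∂MeasureTheory.volume, t ∈ Set.uIoc (0:ℝ) 1 →
      ∀ s ∈ Metric.ball s₀ η, HasDerivAt (fun s => F s t) (F' s t) s := by
    refine Filter.Eventually.of_forall fun t ht s hs => ?_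
    have ht' : t ∈ Icc (0:ℝ) 1 := by
      rw [uIoc_of_le zero_le_one] at ht; exact Ioc_subset_Icc_self ht
    exact hsderiv s hs t ht'
  have key := (intervalIntegral.hasDerivAt_integral_of_dominated_loc_of_deriv_le (Metric.ball_mem_nhds s₀ hη)
    hmeas hint hmeas' hbound hbint hdiffF).2
  -- rewrite the integral of F'
  have hIoc : Set.uIcc (0:ℝ) 1 = Icc (0:ℝ) 1 := uIcc_of_le zero_le_one
  have hΨ : ∀ t ∈ Set.uIcc (0:ℝ) 1,
      HasDerivAt (fun t => f (γ s₀ t) * (c t - p)) (F' s₀ t) t := by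
    intro t ht
    rw [hIoc] at ht
    have hc' : HasDerivAt c (b - a) t := by
      have h1 : HasDerivAt (fun t : ℝ => (1-t) • a) ((-1:ℝ) • a) t :=
        ((hasDerivAt_id t).const_sub 1).smul_const a
      have h2 : HasDerivAt (fun t : ℝ => t • b) ((1:ℝ) • b) t :=
        (hasDerivAt_id t).smul_const b
      refine (h1.add h2).congr_deriv ?_
      simp only [neg_smul, one_smul]
      ring
    have hγt : HasDerivAt (fun t => γ s₀ t) (s₀ • (b - a)) t := by
      have := ((hc'.sub_const p).const_smul s₀).const_add p
      simpa [hγ] using this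
    have hft : HasDerivAt (fun t => f (γ s₀ t)) ((s₀ • (b - a)) • deriv f (γ s₀ t)) t :=
      (hdiff _ (hmemU s₀ hs₀ball t ht)).hasDerivAt.scomp t hγt
    have := hft.mul (hc'.sub_const p)
    refine this.congr_deriv ?_
    simp only [hF', smul_eq_mul, Complex.real_smul, Complex.ofReal_one, one_mul]
    ring
  have hval : (∫ t in (0:ℝ)..1, F' s₀ t) =
      f (p + s₀ • (b - p)) * (b - p) - f (p + s₀ • (a - p)) * (a - p) := by
    rw [intervalIntegral.integral_eq_sub_of_hasDerivAt hΨ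
      (hF'cont.mono (by rw [hIoc]) |>.intervalIntegrable)]
    simp [hγ, hc]
  rw [hval] at key
  exact key

lemma analytic_step (f : ℂ → ℂ) (U : Set ℂ) (hU : IsOpen U)
    (hf : ContinuousOn f U) (X : Set ℂ) (hXcount : X.Countable)
    (hd : ∀ z ∈ U \ X, DifferentiableAt ℂ f z) :
    ∀ z ∈ U, AnalyticAt ℂ f z := by
  intro z hz
  obtain ⟨ε, hε, hball⟩ := Metric.isOpen_iff.1 hU z hz
  have hcb : closedBall z (ε/2) ⊆ U :=
    (closedBall_subset_ball (by linarith)).trans hball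
  have h := Complex.hasFPowerSeriesOnBall_of_differentiable_off_countable
    (R := ⟨ε/2, by positivity⟩) (c := z) (f := f) (s := X) hXcount
    (hf.mono hcb) (fun y hy => hd y ⟨hcb (ball_subset_closedBall hy.1), hy.2⟩)
    (by exact_mod_cast half_pos hε)
  exact h.analyticAt

theorem stmt_8 (f : ℂ → ℂ) (U : Set ℂ) (hU : IsOpen U)
    (hf : ContinuousOn f U) (X : Set ℂ) (hXU : X ⊆ U)
    (hXcomp : IsCompact X) (hXcount : X.Countable)
    (w : ℂ) (hacc : {p | IsAccumulationPoint p X} = {w}) (hwX : w ∈ X)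
    (hd : ∀ z ∈ U \ X, DifferentiableAt ℂ f z)
    (z₁ z₂ z₃ : ℂ) (htri : convexHull ℝ {z₁, z₂, z₃} ⊆ U) :
    triangleIntegral f z₁ z₂ z₃ = 0 := by
  have han : ∀ z ∈ U, AnalyticAt ℂ f z := analytic_step f U hU hf X hXcount hd
  have hdiff : ∀ z ∈ U, DifferentiableAt ℂ f z := fun z hz => (han z hz).differentiableAt
  have hderc : ∀ z ∈ U, ContinuousAt (deriv f) z := by
    intro z hz
    have h1 : ContinuousAt (fun w => fderiv ℂ f w) z := (han z hz).fderiv.continuousAt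
    have h2 : ContinuousAt (fun w => fderiv ℂ f w 1) z :=
      ((ContinuousLinearMap.apply ℂ ℂ (1:ℂ)).continuous.continuousAt).comp h1
    exact h2
  classical
  set K : Set ℂ := convexHull ℝ {z₁, z₂, z₃} with hK
  have hKcomp : IsCompact K := (Set.toFinite {z₁, z₂, z₃}).isCompact_convexHull (𝕜 := ℝ)
  have hKconv : Convex ℝ K := convex_convexHull ℝ _
  have hz₁K : z₁ ∈ K := subset_convexHull ℝ _ (by simp)
  have hz₂K : z₂ ∈ K := subset_convexHull ℝ _ (by simp)
  have hz₃K : z₃ ∈ K := subset_convexHull ℝ _ (by simp)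
  obtain ⟨ε, hε, hthick⟩ := hKcomp.exists_thickening_subset_open hU htri
  set K' : Set ℂ := Metric.cthickening (ε/2) K with hK'
  have hK'U : K' ⊆ U :=
    (Metric.cthickening_subset_thickening' hε (half_lt_self hε) K).trans hthick
  have hK'comp : IsCompact K' :=
    Metric.isCompact_of_isClosed_isBounded Metric.isClosed_cthickening
      (hKcomp.isBounded.cthickening)
  obtain ⟨M', hM'⟩ := hKcomp.exists_bound_of_continuousOn
    (f := fun x => x - z₁) ((continuous_id.sub continuous_const).continuousOn)
  have hM'0 : 0 ≤ M' := le_trans (norm_nonneg (z₁ - z₁)) (hM' z₁ hz₁K)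
  set η : ℝ := (ε/2) / (M' + 1) with hηdef
  have hη : 0 < η := by positivity
  -- membership of scaled points
  have hmemK' : ∀ x ∈ K, ∀ s ∈ Icc (-η) (1+η), z₁ + s • (x - z₁) ∈ K' := by
    intro x hx s hs
    set s' : ℝ := max 0 (min s 1) with hs'def
    have hs'0 : 0 ≤ s' := le_max_left _ _
    have hs'1 : s' ≤ 1 := max_le zero_le_one (min_le_right _ _)
    have hy : z₁ + s' • (x - z₁) ∈ K := by
      have heq : z₁ + s' • (x - z₁) = (1 - s') • z₁ + s' • x := by
        simp only [Complex.real_smul, Complex.ofReal_sub, Complex.ofReal_one]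
        ring
      rw [heq]
      exact hKconv hz₁K hx (by linarith) hs'0 (by ring)
    have habs : |s - s'| ≤ η := by
      rcases le_total s 0 with h0 | h0
      · have : s' = 0 := by
          rw [hs'def, min_eq_left (h0.trans zero_le_one), max_eq_left h0]
        rw [this, abs_le]
        constructor <;> [linarith [hs.1]; linarith]
      · rcases le_total s 1 with h1 | h1
        · have : s' = s := by rw [hs'def, min_eq_left h1, max_eq_right h0]
          simp [this, hη.le]
        · have : s' = 1 := by
            rw [hs'def, min_eq_right h1, max_eq_right zero_le_one]
          rw [this, abs_le]
          constructor <;> [linarith; linarith [hs.2]]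
    have hdist : dist (z₁ + s • (x - z₁)) (z₁ + s' • (x - z₁)) ≤ ε/2 := by
      rw [dist_eq_norm]
      have : z₁ + s • (x - z₁) - (z₁ + s' • (x - z₁)) = (s - s') • (x - z₁) := by
        rw [sub_smul]; ring
      rw [this, norm_smul, Real.norm_eq_abs]
      have h1 : |s - s'| * ‖x - z₁‖ ≤ η * M' :=
        mul_le_mul habs (hM' x hx) (norm_nonneg _) hη.le
      have h2 : η * (M' + 1) = ε/2 := by
        rw [hηdef]; field_simp
      nlinarith
    exact Metric.mem_cthickening_of_dist_le _ _ _ _ hy hdist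
  -- the edge derivative
  have hedge : ∀ a b : ℂ, a ∈ K → b ∈ K → ∀ s₀ ∈ Icc (0:ℝ) 1,
      HasDerivAt
        (fun s : ℝ => ∫ t in (0:ℝ)..1, f (z₁ + s • (((1-t) • a + t • b) - z₁)) * (s • (b - a)))
        (f (z₁ + s₀ • (b - z₁)) * (b - z₁) - f (z₁ + s₀ • (a - z₁)) * (a - z₁)) s₀ := by
    intro a b ha hb s₀ hs₀
    refine edge_hasDerivAt f U hU hdiff hderc K' hK'U hK'comp z₁ a b η hη ?_ s₀ hs₀
    intro s hs t ht
    exact hmemK' _ (hKconv ha hb (by linarith [ht.1, ht.2]) ht.1 (by ring)) s hs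
  -- assemble
  set G : ℂ → ℂ → ℝ → ℂ := fun a b s =>
    ∫ t in (0:ℝ)..1, f (z₁ + s • (((1-t) • a + t • b) - z₁)) * (s • (b - a)) with hG
  set h : ℝ → ℂ := fun s => G z₁ z₂ s + G z₂ z₃ s + G z₃ z₁ s with hh
  have hderiv : ∀ s ∈ Set.uIcc (0:ℝ) 1, HasDerivAt h (0:ℂ) s := by
    intro s hs
    rw [uIcc_of_le zero_le_one] at hs
    have h12 := hedge z₁ z₂ hz₁K hz₂K s hs
    have h23 := hedge z₂ z₃ hz₂K hz₃K s hs
    have h31 := hedge z₃ z₁ hz₃K hz₁K s hs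
    have := (h12.add h23).add h31
    refine this.congr_deriv ?_
    ring
  have hint0 : (∫ _ in (0:ℝ)..1, (0:ℂ)) = h 1 - h 0 :=
    intervalIntegral.integral_eq_sub_of_hasDerivAt hderiv intervalIntegrable_const
  have h10 : h 1 = h 0 := by
    have := hint0.symm
    rw [intervalIntegral.integral_zero] at hint0
    linear_combination -hint0
  have hzero : h 0 = 0 := by
    have hGz : ∀ a b : ℂ, G a b 0 = 0 := by
      intro a b
      rw [hG]
      simp
    rw [hh]; simp [hGz]
  have hone : h 1 = triangleIntegral f z₁ z₂ z₃ := by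
    have hGs : ∀ a b : ℂ, G a b 1 = segmentIntegral f a b := by
      intro a b
      rw [hG]
      simp only
      unfold segmentIntegral
      apply intervalIntegral.integral_congr
      intro t _
      simp
    rw [hh]
    simp only [hGs]
    rfl
  rw [← hone, h10, hzero]
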